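/- arXiv:math/0607649 — 4 statements merged into one kernel-verified Lean document; each statement's English description precedes it below -/
import Mathlib

section
/- Let K be a field of characteristic zero, V a formal power series over K, and W a formal power series over K such that W · V' = 1 (product of formal power series, V' the formal derivative of V). Define the operator Y = X ∘ W(D) on polynomials, i.e., Y p = x · (W(D)p). Then for every polynomial p over K, V(D)(Y p) − Y(V(D)p) = p; that is, the commutator [V(D), X W(D)] is the identity operator. -/
open Polynomial PowerSeries

/-- The operator `f(D)` on polynomials: `f(D)p = Σ_k f_k p^{(k)}` (a finite sum). -/
noncomputable def applyD {K : Type*} [Field K] (f : PowerSeries K) (p : K[X]) : K[X] :=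
  ∑ k ∈ Finset.range (p.natDegree + 1), (PowerSeries.coeff k f) • (derivative^[k] p)

section Aux

variable {K : Type*} [Field K]

lemma applyD_eq_sum (f : PowerSeries K) (p : K[X]) {N : ℕ} (hN : p.natDegree < N) :
    applyD f p = ∑ k ∈ Finset.range N, (PowerSeries.coeff k f) • (derivative^[k] p) := by
  apply Finset.sum_subset
  · intro x hx
    simp only [Finset.mem_range] at *
    omega
  · intro x _ hx2
    simp only [Finset.mem_range, not_lt] at hx2
    rw [Polynomial.iterate_derivative_eq_zero (by omega), smul_zero]

lemma natDegree_applyD_le (f : PowerSeries K) (p : K[X]) :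
    (applyD f p).natDegree ≤ p.natDegree := by
  apply Polynomial.natDegree_sum_le_of_forall_le
  intro i _
  exact (Polynomial.natDegree_smul_le _ _).trans
    ((Polynomial.natDegree_iterate_derivative p i).trans (Nat.sub_le _ _))

lemma iterate_derivative_X_mul (q : K[X]) (k : ℕ) :
    derivative^[k] (Polynomial.X * q)
      = Polynomial.X * derivative^[k] q + k • derivative^[k - 1] q := by
  induction k with
  | zero => simp
  | succ k ih =>
    rw [Function.iterate_succ_apply', ih, derivative_add, derivative_mul, Polynomial.derivative_X,
      one_mul, ← Function.iterate_succ_apply' derivative k q]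
    have h : derivative ((k : ℕ) • derivative^[k - 1] q)
        = k • derivative^[k] q := by
      cases k with
      | zero => simp
      | succ m =>
        rw [map_nsmul, ← Function.iterate_succ_apply' derivative (m + 1 - 1) q]
        norm_num
    rw [h, Nat.add_sub_cancel, succ_nsmul]
    ring

lemma applyD_X_mul (f : PowerSeries K) (q : K[X]) :
    applyD f (Polynomial.X * q)
      = Polynomial.X * applyD f q + applyD (PowerSeries.derivative K f) q := by
  have h1 : (Polynomial.X * q).natDegree < q.natDegree + 2 := by
    have := Polynomial.natDegree_mul_le (p := (Polynomial.X : K[X])) (q := q)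
    simp only [natDegree_X] at this
    omega
  rw [applyD_eq_sum f _ h1,
    applyD_eq_sum f q (by omega : q.natDegree < q.natDegree + 2)]
  simp only [iterate_derivative_X_mul, smul_add]
  rw [Finset.sum_add_distrib]
  congr 1
  · rw [Finset.mul_sum]
    exact Finset.sum_congr rfl fun k _ => (mul_smul_comm _ _ _).symm
  · rw [Finset.sum_range_succ']
    simp only [zero_smul, smul_zero, add_zero, Nat.add_sub_cancel]
    unfold applyD
    apply Finset.sum_congr rfl
    intro j _
    rw [PowerSeries.coeff_derivative, ← Nat.cast_smul_eq_nsmul K, smul_smul]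
    push_cast
    ring_nf

lemma applyD_mul (f g : PowerSeries K) (p : K[X]) :
    applyD f (applyD g p) = applyD (f * g) p := by
  set d := p.natDegree with hd
  set F : ℕ × ℕ → K[X] :=
    fun x => (PowerSeries.coeff x.1 f * PowerSeries.coeff x.2 g) •
      derivative^[x.1 + x.2] p with hF
  have hFzero : ∀ x : ℕ × ℕ, d + 1 ≤ x.1 + x.2 → F x = 0 := by
    intro x hx
    rw [hF]
    simp only
    rw [Polynomial.iterate_derivative_eq_zero (by omega), smul_zero]
  have hL : applyD f (applyD g p)
      = ∑ x ∈ Finset.range (d + 1) ×ˢ Finset.range (d + 1), F x := by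
    rw [applyD_eq_sum f (applyD g p)
      (Nat.lt_of_le_of_lt (natDegree_applyD_le g p) (Nat.lt_succ_self d))]
    rw [Finset.sum_product]
    apply Finset.sum_congr rfl
    intro k _
    unfold applyD
    rw [← hd, Polynomial.iterate_derivative_sum, Finset.smul_sum]
    apply Finset.sum_congr rfl
    intro j _
    rw [Polynomial.iterate_derivative_smul, smul_smul, hF]
    simp only
    rw [← Function.iterate_add_apply]
  have hR : applyD (f * g) p
      = ∑ n ∈ Finset.range (d + 1), ∑ x ∈ Finset.HasAntidiagonal.antidiagonal n, F x := by
    unfold applyD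
    rw [← hd]
    apply Finset.sum_congr rfl
    intro n _
    rw [PowerSeries.coeff_mul, Finset.sum_smul]
    apply Finset.sum_congr rfl
    intro x hx
    rw [hF]
    simp only
    rw [Finset.HasAntidiagonal.mem_antidiagonal.mp hx]
  rw [hL, hR, ← Finset.sum_biUnion]
  · apply (Finset.sum_subset _ _).symm
    · intro x hx
      simp only [Finset.mem_biUnion, Finset.mem_range, Finset.HasAntidiagonal.mem_antidiagonal] at hx
      obtain ⟨n, hn, hxn⟩ := hx
      simp only [Finset.mem_product, Finset.mem_range]
      omega
    · intro x _ hx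
      apply hFzero
      simp only [Finset.mem_biUnion, Finset.mem_range, Finset.HasAntidiagonal.mem_antidiagonal] at hx
      by_contra h
      exact hx ⟨x.1 + x.2, by omega, rfl⟩
  · intro i _ j _ hij
    simp only [Function.onFun]
    rw [Finset.disjoint_left]
    intro x hxi hxj
    rw [Finset.HasAntidiagonal.mem_antidiagonal] at hxi hxj
    exact hij (hxi ▸ hxj ▸ rfl)

lemma applyD_one (p : K[X]) : applyD 1 p = p := by
  unfold applyD
  rw [Finset.sum_eq_single 0]
  · simp
  · intro b _ hb
    simp [PowerSeries.coeff_one, hb]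
  · intro h
    exact absurd (Finset.mem_range.mpr (Nat.succ_pos _)) h

end Aux

theorem commutator_VD_Y_eq_id {K : Type*} [Field K] [CharZero K]
    (V W : PowerSeries K) (hW : W * PowerSeries.derivative K V = 1) (p : K[X]) :
    applyD V (Polynomial.X * applyD W p) - Polynomial.X * applyD W (applyD V p) = p := by
  rw [applyD_X_mul, applyD_mul V W p, mul_comm V W, ← applyD_mul W V p,
    applyD_mul (PowerSeries.derivative K V) W p, mul_comm _ W, hW, applyD_one]
  ring
end

section
/- Let K be a field of characteristic zero, V a formal power series over K with constant coefficient 0 and coefficient of z equal to 1, and let U be the compositional inverse of V, i.e., the formal power series with constant coefficient 0 satisfying V(U(v)) = v. Let W be the formal power series with W · V' = 1, define Y p = x · (W(D)p) on polynomials, and y_n = Y^n 1. Then for all m, n ≥ 0, m! times the coefficient of x^m in y_n equals n! times the coefficient of v^n in the formal power series U(v)^m. -/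
open Polynomial PowerSeries

/-- The raising operator `Y = X ∘ W(D)`. -/
noncomputable def Yop {K : Type*} [Field K] (W : PowerSeries K) (p : K[X]) : K[X] :=
  Polynomial.X * applyD W p

/-- Composition `g ∘ f` of formal power series, valid when `f` has zero constant term:
the coefficient of `v^n` is `Σ_{k ≤ n} g_k · (coefficient of v^n in f^k)`. -/
noncomputable def psComp {K : Type*} [Field K] (g f : PowerSeries K) : PowerSeries K :=
  PowerSeries.mk fun n =>
    ∑ k ∈ Finset.range (n + 1), PowerSeries.coeff k g * PowerSeries.coeff n (f ^ k)

namespace CanonAux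

variable {K : Type*} [Field K]

lemma coeff_pow_eq_zero {f : PowerSeries K} (hf : PowerSeries.constantCoeff f = 0)
    {j k : ℕ} (h : j < k) : PowerSeries.coeff j (f ^ k) = 0 := by
  have hdvd : (PowerSeries.X : PowerSeries K) ^ k ∣ f ^ k :=
    pow_dvd_pow_of_dvd (PowerSeries.X_dvd_iff.mpr hf) k
  exact PowerSeries.X_pow_dvd_iff.mp hdvd j h

lemma coeff_psComp (g f : PowerSeries K) (n : ℕ) :
    PowerSeries.coeff n (psComp g f)
      = ∑ k ∈ Finset.range (n + 1),
          PowerSeries.coeff k g * PowerSeries.coeff n (f ^ k) :=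
  PowerSeries.coeff_mk _ _

lemma aeval_trunc (f g : PowerSeries K) (N : ℕ) :
    Polynomial.aeval f (PowerSeries.trunc N g)
      = ∑ k ∈ Finset.range N, PowerSeries.coeff k g • f ^ k := by
  cases N with
  | zero => simp [PowerSeries.trunc_zero']
  | succ n =>
    rw [Polynomial.aeval_eq_sum_range' (PowerSeries.natDegree_trunc_lt g n)]
    refine Finset.sum_congr rfl fun k hk => ?_
    rw [PowerSeries.coeff_trunc, if_pos (Finset.mem_range.mp hk)]

lemma coeff_aeval_zero {f : PowerSeries K} (hf : PowerSeries.constantCoeff f = 0)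
    {q : K[X]} {N n : ℕ} (hq : ∀ s < N, q.coeff s = 0) (hn : n < N) :
    PowerSeries.coeff n (Polynomial.aeval f q) = 0 := by
  rw [Polynomial.aeval_eq_sum_range, map_sum]
  refine Finset.sum_eq_zero fun s _ => ?_
  rcases lt_or_ge s N with hs | hs
  · rw [hq s hs, zero_smul, map_zero]
  · rw [LinearMap.map_smul, coeff_pow_eq_zero hf (lt_of_lt_of_le hn hs), smul_zero]

lemma coeff_psComp_eq_aeval {f : PowerSeries K} (hf : PowerSeries.constantCoeff f = 0)
    (g : PowerSeries K) {n N : ℕ} (h : n < N) :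
    PowerSeries.coeff n (psComp g f)
      = PowerSeries.coeff n (Polynomial.aeval f (PowerSeries.trunc N g)) := by
  rw [aeval_trunc, map_sum, coeff_psComp]
  refine Finset.sum_subset (Finset.range_subset_range.mpr h) (fun k _ hk => ?_) |>.trans
    (Finset.sum_congr rfl fun k _ => by rw [LinearMap.map_smul, smul_eq_mul])
  rw [coeff_pow_eq_zero hf (by simpa using hk), mul_zero]

lemma X_pow_dvd_sub {f : PowerSeries K} (hf : PowerSeries.constantCoeff f = 0)
    (g : PowerSeries K) (N : ℕ) :
    (PowerSeries.X : PowerSeries K) ^ N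
      ∣ psComp g f - Polynomial.aeval f (PowerSeries.trunc N g) := by
  rw [PowerSeries.X_pow_dvd_iff]
  intro j hj
  rw [map_sub, coeff_psComp_eq_aeval hf g hj, sub_self]

lemma coeff_mul_psComp {f : PowerSeries K} (hf : PowerSeries.constantCoeff f = 0)
    (h g : PowerSeries K) (n : ℕ) :
    PowerSeries.coeff n (h * psComp g f)
      = ∑ k ∈ Finset.range (n + 1),
          PowerSeries.coeff k g * PowerSeries.coeff n (h * f ^ k) := by
  obtain ⟨r, hr⟩ := X_pow_dvd_sub hf g (n + 1)
  have hsplit : h * psComp g f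
      = h * Polynomial.aeval f (PowerSeries.trunc (n + 1) g)
        + PowerSeries.X ^ (n + 1) * (h * r) := by
    have : psComp g f = Polynomial.aeval f (PowerSeries.trunc (n + 1) g)
        + PowerSeries.X ^ (n + 1) * r := by rw [← hr]; ring
    rw [this]; ring
  rw [hsplit, map_add]
  have h0 : PowerSeries.coeff n (PowerSeries.X ^ (n + 1) * (h * r)) = 0 :=
    PowerSeries.X_pow_dvd_iff.mp (Dvd.intro _ rfl) n (Nat.lt_succ_self n)
  rw [h0, add_zero, aeval_trunc, Finset.mul_sum, map_sum]
  refine Finset.sum_congr rfl fun k _ => ?_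
  rw [mul_smul_comm, LinearMap.map_smul, smul_eq_mul]

lemma psComp_mul {f : PowerSeries K} (hf : PowerSeries.constantCoeff f = 0)
    (g₁ g₂ : PowerSeries K) :
    psComp (g₁ * g₂) f = psComp g₁ f * psComp g₂ f := by
  ext n
  obtain ⟨r₁, hr₁⟩ := X_pow_dvd_sub hf g₁ (n + 1)
  obtain ⟨r₂, hr₂⟩ := X_pow_dvd_sub hf g₂ (n + 1)
  set A₁ := Polynomial.aeval f (PowerSeries.trunc (n + 1) g₁) with hA₁
  set A₂ := Polynomial.aeval f (PowerSeries.trunc (n + 1) g₂) with hA₂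
  have e₁ : psComp g₁ f = A₁ + PowerSeries.X ^ (n + 1) * r₁ := by rw [← hr₁]; ring
  have e₂ : psComp g₂ f = A₂ + PowerSeries.X ^ (n + 1) * r₂ := by rw [← hr₂]; ring
  have hz : ∀ s : PowerSeries K,
      PowerSeries.coeff n (PowerSeries.X ^ (n + 1) * s) = 0 := fun s =>
    PowerSeries.X_pow_dvd_iff.mp (Dvd.intro _ rfl) n (Nat.lt_succ_self n)
  have hRHS : PowerSeries.coeff n (psComp g₁ f * psComp g₂ f)
      = PowerSeries.coeff n (A₁ * A₂) := by
    rw [e₁, e₂]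
    have : (A₁ + PowerSeries.X ^ (n + 1) * r₁) * (A₂ + PowerSeries.X ^ (n + 1) * r₂)
        = A₁ * A₂ + PowerSeries.X ^ (n + 1)
            * (r₁ * A₂ + A₁ * r₂ + PowerSeries.X ^ (n + 1) * (r₁ * r₂)) := by ring
    rw [this, map_add, hz, add_zero]
  rw [hRHS, coeff_psComp_eq_aeval hf (g₁ * g₂) (Nat.lt_succ_self n)]
  have hAA : A₁ * A₂
      = Polynomial.aeval f (PowerSeries.trunc (n + 1) g₁ * PowerSeries.trunc (n + 1) g₂) := by
    rw [map_mul]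
  rw [hAA]
  have hqc : ∀ s < n + 1,
      (PowerSeries.trunc (n + 1) (g₁ * g₂)
        - PowerSeries.trunc (n + 1) g₁ * PowerSeries.trunc (n + 1) g₂).coeff s = 0 := by
    intro s hs
    rw [Polynomial.coeff_sub, Polynomial.coeff_mul, PowerSeries.coeff_trunc, if_pos hs,
      PowerSeries.coeff_mul]
    rw [sub_eq_zero]
    refine Finset.sum_congr rfl fun p hp => ?_
    obtain ⟨hp1, hp2⟩ : p.1 ≤ s ∧ p.2 ≤ s := by
      have := Finset.HasAntidiagonal.mem_antidiagonal.mp hp; omega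
    rw [PowerSeries.coeff_trunc, PowerSeries.coeff_trunc,
      if_pos (lt_of_le_of_lt hp1 hs), if_pos (lt_of_le_of_lt hp2 hs)]
  have h0 := coeff_aeval_zero hf hqc (Nat.lt_succ_self n)
  rw [map_sub, map_sub, sub_eq_zero] at h0
  exact h0

lemma psComp_one (f : PowerSeries K) : psComp 1 f = 1 := by
  ext n
  rw [coeff_psComp]
  rw [Finset.sum_eq_single 0]
  · simp
  · intro k _ hk
    rw [PowerSeries.coeff_one, if_neg hk, zero_mul]
  · intro h; simp at h

/-- From `V ∘ U = X` we get `U' · (V' ∘ U) = 1`. -/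
lemma deriv_comp_eq_one {V U : PowerSeries K}
    (hU0 : PowerSeries.constantCoeff U = 0)
    (hUV : psComp V U = PowerSeries.X) :
    PowerSeries.derivative K U * psComp (PowerSeries.derivative K V) U = 1 := by
  ext n
  rw [coeff_mul_psComp hU0]
  have hterm : ∀ k ∈ Finset.range (n + 1),
      PowerSeries.coeff k (PowerSeries.derivative K V)
          * PowerSeries.coeff n (PowerSeries.derivative K U * U ^ k)
        = (PowerSeries.coeff (k + 1) V * PowerSeries.coeff (n + 1) (U ^ (k + 1)))
            * (n + 1 : K) := by
    intro k _
    have hd : PowerSeries.derivative K (U ^ (k + 1))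
        = (k + 1) • (U ^ k • PowerSeries.derivative K U) := by
      simpa using Derivation.leibniz_pow (PowerSeries.derivative K) (a := U) (k + 1)
    have hc : PowerSeries.coeff n (PowerSeries.derivative K (U ^ (k + 1)))
        = (k + 1 : K) * (PowerSeries.coeff n (PowerSeries.derivative K U * U ^ k)) := by
      have he : (U ^ k) • PowerSeries.derivative K U
          = PowerSeries.derivative K U * U ^ k := by
        rw [smul_eq_mul]; ring
      rw [he] at hd
      rw [hd, map_nsmul, nsmul_eq_mul]
      push_cast; ring
    have hc' : PowerSeries.coeff n (PowerSeries.derivative K (U ^ (k + 1)))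
        = PowerSeries.coeff (n + 1) (U ^ (k + 1)) * (n + 1 : K) :=
      PowerSeries.coeff_derivative _ n
    rw [PowerSeries.coeff_derivative]
    have := hc.symm.trans hc'
    calc PowerSeries.coeff (k + 1) V * (k + 1 : K)
          * PowerSeries.coeff n (PowerSeries.derivative K U * U ^ k)
        = PowerSeries.coeff (k + 1) V
            * ((k + 1 : K) * PowerSeries.coeff n (PowerSeries.derivative K U * U ^ k)) := by
          ring
      _ = PowerSeries.coeff (k + 1) V
            * (PowerSeries.coeff (n + 1) (U ^ (k + 1)) * (n + 1 : K)) := by rw [this]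
      _ = (PowerSeries.coeff (k + 1) V * PowerSeries.coeff (n + 1) (U ^ (k + 1)))
            * (n + 1 : K) := by ring
  rw [Finset.sum_congr rfl hterm, ← Finset.sum_mul]
  have hsum : ∑ k ∈ Finset.range (n + 1),
      PowerSeries.coeff (k + 1) V * PowerSeries.coeff (n + 1) (U ^ (k + 1))
        = PowerSeries.coeff (n + 1) (psComp V U) := by
    rw [coeff_psComp]
    rw [Finset.sum_range_succ' (fun k =>
      PowerSeries.coeff k V * PowerSeries.coeff (n + 1) (U ^ k)) (n + 1)]
    simp
  rw [hsum, hUV]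
  cases n with
  | zero => simp
  | succ n =>
    rw [PowerSeries.coeff_X, if_neg (by omega), PowerSeries.coeff_one, if_neg (by omega)]
    ring

/-- `W ∘ U = U'`. -/
lemma psComp_W_eq_deriv {V U W : PowerSeries K}
    (hU0 : PowerSeries.constantCoeff U = 0)
    (hUV : psComp V U = PowerSeries.X)
    (hW : W * PowerSeries.derivative K V = 1) :
    psComp W U = PowerSeries.derivative K U := by
  have h1 : psComp W U * psComp (PowerSeries.derivative K V) U = 1 := by
    rw [← psComp_mul hU0, hW, psComp_one]
  have h2 := deriv_comp_eq_one hU0 hUV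
  calc psComp W U
      = psComp W U * (PowerSeries.derivative K U
          * psComp (PowerSeries.derivative K V) U) := by rw [h2, mul_one]
    _ = (psComp W U * psComp (PowerSeries.derivative K V) U)
          * PowerSeries.derivative K U := by ring
    _ = PowerSeries.derivative K U := by rw [h1, one_mul]

/-- The recursion on the power-series side. -/
lemma series_rec {V U W : PowerSeries K}
    (hU0 : PowerSeries.constantCoeff U = 0)
    (hUV : psComp V U = PowerSeries.X)
    (hW : W * PowerSeries.derivative K V = 1) (m n : ℕ) :
    PowerSeries.coeff (n + 1) (U ^ (m + 1)) * (n + 1 : K)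
      = (m + 1 : K) * ∑ k ∈ Finset.range (n + 1),
          PowerSeries.coeff k W * PowerSeries.coeff n (U ^ (m + k)) := by
  have hd : PowerSeries.derivative K (U ^ (m + 1))
      = (m + 1) • (U ^ m • PowerSeries.derivative K U) := by
    simpa using Derivation.leibniz_pow (PowerSeries.derivative K) (a := U) (m + 1)
  have h1 : PowerSeries.coeff (n + 1) (U ^ (m + 1)) * (n + 1 : K)
      = PowerSeries.coeff n (PowerSeries.derivative K (U ^ (m + 1))) :=
    (PowerSeries.coeff_derivative _ n).symm
  have he : (U ^ m) • PowerSeries.derivative K U = U ^ m * psComp W U := by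
    rw [smul_eq_mul, psComp_W_eq_deriv hU0 hUV hW]
  rw [he] at hd
  rw [h1, hd, map_nsmul, nsmul_eq_mul, coeff_mul_psComp hU0, Finset.mul_sum, Finset.mul_sum]
  push_cast
  refine Finset.sum_congr rfl fun k _ => by rw [← pow_add]

end CanonAux

theorem coeff_canonical_polynomials_eq_inverse_powers {K : Type*} [Field K] [CharZero K]
    (V U W : PowerSeries K)
    (hV0 : PowerSeries.constantCoeff V = 0)
    (hV1 : PowerSeries.coeff 1 V = 1)
    (hU0 : PowerSeries.constantCoeff U = 0)
    (hUV : psComp V U = PowerSeries.X)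
    (hW : W * PowerSeries.derivative K V = 1)
    (m n : ℕ) :
    (m.factorial : K) * ((Yop W)^[n] 1).coeff m
      = (n.factorial : K) * PowerSeries.coeff n (U ^ m) := by
  induction n generalizing m with
  | zero =>
    rw [Function.iterate_zero_apply]
    cases m with
    | zero => simp
    | succ m =>
      rw [Polynomial.coeff_one, if_neg (by omega), mul_zero,
        PowerSeries.coeff_zero_eq_constantCoeff, map_pow, hU0, zero_pow (by omega), mul_zero]
  | succ n IH =>
    rw [Function.iterate_succ_apply']
    set p := (Yop W)^[n] 1 with hp
    cases m with
    | zero =>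
      rw [Yop]
      rw [Polynomial.mul_coeff_zero, Polynomial.coeff_X_zero, zero_mul, mul_zero,
        pow_zero, PowerSeries.coeff_one, if_neg (by omega), mul_zero]
    | succ m =>
      rw [Yop, Polynomial.coeff_X_mul]
      -- expand the coefficient of applyD
      have hcoeff : (applyD W p).coeff m
          = ∑ k ∈ Finset.range (p.natDegree + 1),
              PowerSeries.coeff k W
                * (((m + k).descFactorial k : K) * p.coeff (m + k)) := by
        rw [applyD, Polynomial.finset_sum_coeff]
        refine Finset.sum_congr rfl fun k _ => ?_
        rw [Polynomial.coeff_smul, smul_eq_mul, Polynomial.coeff_iterate_derivative,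
          nsmul_eq_mul]
      -- the common term
      set c : ℕ → K := fun k =>
        (m + 1 : K) * (PowerSeries.coeff k W
          * ((n.factorial : K) * PowerSeries.coeff n (U ^ (m + k)))) with hc
      have hLHS : ((m + 1).factorial : K) * (applyD W p).coeff m
          = ∑ k ∈ Finset.range (p.natDegree + 1), c k := by
        rw [hcoeff, Finset.mul_sum]
        refine Finset.sum_congr rfl fun k _ => ?_
        have hnat : ((m + 1).factorial * (m + k).descFactorial k : ℕ)
            = (m + 1) * (m + k).factorial := by
          have h1 := Nat.factorial_mul_descFactorial (Nat.le_add_left k m)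
          have h2 : m + k - k = m := by omega
          rw [h2] at h1
          rw [Nat.factorial_succ, Nat.mul_assoc, h1]
        calc ((m + 1).factorial : K)
              * (PowerSeries.coeff k W * (((m + k).descFactorial k : K) * p.coeff (m + k)))
            = PowerSeries.coeff k W
                * ((((m + 1).factorial * (m + k).descFactorial k : ℕ) : K)
                  * p.coeff (m + k)) := by push_cast; ring
          _ = PowerSeries.coeff k W
                * ((m + 1 : K) * (((m + k).factorial : K) * p.coeff (m + k))) := by
              rw [hnat]; push_cast; ring
          _ = PowerSeries.coeff k W
                * ((m + 1 : K) * ((n.factorial : K)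
                    * PowerSeries.coeff n (U ^ (m + k)))) := by rw [IH (m + k)]
          _ = c k := by rw [hc]; ring
      have hRHS : ((n + 1).factorial : K) * PowerSeries.coeff (n + 1) (U ^ (m + 1))
          = ∑ k ∈ Finset.range (n + 1), c k := by
        have hrec := CanonAux.series_rec hU0 hUV hW m n
        calc ((n + 1).factorial : K) * PowerSeries.coeff (n + 1) (U ^ (m + 1))
            = (n.factorial : K)
                * (PowerSeries.coeff (n + 1) (U ^ (m + 1)) * (n + 1 : K)) := by
              rw [Nat.factorial_succ]; push_cast; ring
          _ = (n.factorial : K) * ((m + 1 : K) * ∑ k ∈ Finset.range (n + 1),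
                PowerSeries.coeff k W * PowerSeries.coeff n (U ^ (m + k))) := by
              rw [hrec]
          _ = ∑ k ∈ Finset.range (n + 1), c k := by
              rw [Finset.mul_sum, Finset.mul_sum]
              refine Finset.sum_congr rfl fun k _ => ?_
              rw [hc]; ring
      rw [hLHS, hRHS]
      -- both sums equal the sum over the larger range
      set M := max (p.natDegree + 1) (n + 1) with hM
      have hzero1 : ∀ k ∈ Finset.range M, k ∉ Finset.range (p.natDegree + 1) → c k = 0 := by
        intro k _ hk
        have hk' : p.natDegree < k := by simpa using hk
        have hpz : p.coeff (m + k) = 0 :=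
          Polynomial.coeff_eq_zero_of_natDegree_lt (by omega)
        have : (n.factorial : K) * PowerSeries.coeff n (U ^ (m + k)) = 0 := by
          rw [← IH (m + k), hpz, mul_zero]
        rw [hc]; dsimp only; rw [this, mul_zero, mul_zero]
      have hzero2 : ∀ k ∈ Finset.range M, k ∉ Finset.range (n + 1) → c k = 0 := by
        intro k _ hk
        have hk' : n < k := by simpa using hk
        rw [hc]; dsimp only
        rw [CanonAux.coeff_pow_eq_zero hU0 (by omega), mul_zero, mul_zero, mul_zero]
      rw [Finset.sum_subset (Finset.range_subset_range.mpr (le_max_left _ _)) hzero1,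
        ← Finset.sum_subset (Finset.range_subset_range.mpr (le_max_right _ _)) hzero2]
end

section
/- Let K be a field of characteristic zero and W a formal power series over K. Define the dual vector field operator Ỹ on formal power series in the variable A over K by Ỹ f = W · f' (product with the formal derivative). Define also Y p = x · (W(D)p) on polynomials and y_n = Y^n 1. Then for all m, n ≥ 0, the constant coefficient of the formal power series Ỹ^n(A^m) equals m! times the coefficient of x^m in y_n. -/
open Polynomial PowerSeries

/-- The dual vector field `Ỹ f = W · f'` acting on formal power series. -/
noncomputable def Ytilde {K : Type*} [Field K] (W : PowerSeries K) (f : PowerSeries K) :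
    PowerSeries K :=
  W * PowerSeries.derivative K f

section Aux

variable {K : Type*} [Field K] [CharZero K]

/-- The duality pairing `⟨f, p⟩ = Σ_k k! f_k p_k`. -/
noncomputable def Bpair (f : PowerSeries K) (p : K[X]) : K :=
  p.sum fun k c => (k.factorial : K) * (PowerSeries.coeff k f) * c

lemma Bpair_monomial (f : PowerSeries K) (t : ℕ) (a : K) :
    Bpair f (monomial t a) = (t.factorial : K) * (PowerSeries.coeff t f) * a := by
  rw [Bpair, Polynomial.sum_monomial_index] ; rw [mul_zero]

lemma Bpair_add (f : PowerSeries K) (p q : K[X]) :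
    Bpair f (p + q) = Bpair f p + Bpair f q := by
  rw [Bpair, Bpair, Bpair, Polynomial.sum_add_index]
  · intro i; rw [mul_zero]
  · intro a b₁ b₂; ring

lemma Bpair_finsetSum (f : PowerSeries K) {ι : Type*} (s : Finset ι) (g : ι → K[X]) :
    Bpair f (∑ i ∈ s, g i) = ∑ i ∈ s, Bpair f (g i) := by
  classical
  induction s using Finset.cons_induction with
  | empty => simp [Bpair]
  | cons i s hi ih => rw [Finset.sum_cons, Finset.sum_cons, Bpair_add, ih]

lemma applyD_eq (f : PowerSeries K) (p : K[X]) (N : ℕ) (h : p.natDegree < N) :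
    applyD f p = ∑ k ∈ Finset.range N, (PowerSeries.coeff k f) • (derivative^[k] p) := by
  rw [applyD]
  apply Finset.sum_subset (Finset.range_subset_range.2 h)
  intro k hk hk'
  have : p.natDegree < k := by
    simp only [Finset.mem_range, not_lt] at hk'
    omega
  rw [Polynomial.iterate_derivative_eq_zero this, smul_zero]

lemma applyD_add (f : PowerSeries K) (p q : K[X]) :
    applyD f (p + q) = applyD f p + applyD f q := by
  set N := p.natDegree + q.natDegree + (p + q).natDegree + 1 with hN
  rw [applyD_eq f p N (by omega), applyD_eq f q N (by omega),
    applyD_eq f (p + q) N (by omega), ← Finset.sum_add_distrib]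
  refine Finset.sum_congr rfl fun k _ => ?_
  rw [iterate_map_add, smul_add]

lemma Yop_add (W : PowerSeries K) (p q : K[X]) :
    Yop W (p + q) = Yop W p + Yop W q := by
  rw [Yop, Yop, Yop, applyD_add, mul_add]

lemma iterate_derivative_monomial (t : ℕ) (a : K) (k : ℕ) :
    derivative^[k] (monomial t a : K[X]) = Polynomial.monomial (t - k) ((t.descFactorial k) • a) := by
  induction k with
  | zero => simp
  | succ k ih =>
    rw [Function.iterate_succ_apply', ih, Polynomial.derivative_monomial,
      show t - k - 1 = t - (k + 1) from by omega, Nat.descFactorial_succ]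
    congr 1
    push_cast [nsmul_eq_mul]
    ring

/-- The key adjointness: `⟨Ỹ f, p⟩ = ⟨f, Y p⟩`. -/
lemma Bpair_adjoint (W f : PowerSeries K) (p : K[X]) :
    Bpair (Ytilde W f) p = Bpair f (Yop W p) := by
  induction p using Polynomial.induction_on' with
  | add p q hp hq => rw [Bpair_add, Yop_add, Bpair_add, hp, hq]
  | monomial t a =>
    have hYop : Yop W (monomial t a) =
        ∑ k ∈ Finset.range (t + 1),
          Polynomial.monomial (t - k + 1) ((PowerSeries.coeff k W) * ((t.descFactorial k) • a)) := by
      rw [Yop, applyD_eq W _ (t + 1) (lt_of_le_of_lt (natDegree_monomial_le a) (Nat.lt_succ_self t)),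
        Finset.mul_sum]
      refine Finset.sum_congr rfl fun k _ => ?_
      rw [iterate_derivative_monomial, Polynomial.smul_monomial, smul_eq_mul, Polynomial.X_mul_monomial]
    rw [hYop, Bpair_finsetSum, Bpair_monomial, Ytilde, PowerSeries.coeff_mul]
    simp_rw [PowerSeries.coeff_derivative]
    rw [Finset.Nat.sum_antidiagonal_eq_sum_range_succ_mk, Finset.mul_sum, Finset.sum_mul]
    refine Finset.sum_congr rfl fun k hk => ?_
    have hk' : k ≤ t := Nat.lt_succ_iff.mp (Finset.mem_range.mp hk)
    rw [Bpair_monomial]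
    have h1 : ((t - k).factorial : K) * (t.descFactorial k : K) = (t.factorial : K) := by
      exact_mod_cast congrArg (Nat.cast : ℕ → K) (Nat.factorial_mul_descFactorial hk')
    rw [Nat.factorial_succ]
    push_cast [nsmul_eq_mul]
    rw [← h1]
    ring

lemma Bpair_adjoint_iter (W : PowerSeries K) (n : ℕ) (f : PowerSeries K) (p : K[X]) :
    Bpair ((Ytilde W)^[n] f) p = Bpair f ((Yop W)^[n] p) := by
  induction n generalizing f p with
  | zero => rfl
  | succ n ih =>
    rw [Function.iterate_succ_apply, Function.iterate_succ_apply', ih, Bpair_adjoint]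

lemma Bpair_one (f : PowerSeries K) : Bpair f 1 = PowerSeries.constantCoeff f := by
  rw [← Polynomial.monomial_zero_one, Bpair_monomial]
  simp

lemma Bpair_X_pow (m : ℕ) (p : K[X]) :
    Bpair (PowerSeries.X ^ m : PowerSeries K) p = (m.factorial : K) * p.coeff m := by
  rw [Bpair, Polynomial.sum_def]
  simp_rw [PowerSeries.coeff_X_pow]
  rw [Finset.sum_eq_single m]
  · simp
  · intro b _ hb; simp [hb]
  · intro hm
    rw [Polynomial.notMem_support_iff.mp hm]
    simp

end Aux

theorem dual_vector_field_matches_raising {K : Type*} [Field K] [CharZero K]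
    (W : PowerSeries K) (m n : ℕ) :
    PowerSeries.constantCoeff ((Ytilde W)^[n] (PowerSeries.X ^ m))
      = (m.factorial : K) * ((Yop W)^[n] 1).coeff m := by
  rw [← Bpair_one, Bpair_adjoint_iter, Bpair_X_pow]
end

section
/- Let K be a field of characteristic zero, V a formal power series over K with constant coefficient 0 and coefficient of z equal to 1, U its compositional inverse, and W the formal power series with W · V' = 1. Define the operator Ỹ on formal power series in A by Ỹ f = W · f'. Then for all m, n ≥ 0, the constant coefficient of Ỹ^n(A^m) equals n! times the coefficient of v^n in U(v)^m. -/
open Polynomial PowerSeries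

section Aux
variable {K : Type*} [Field K]

lemma coeff_psComp (g f : PowerSeries K) (n : ℕ) :
    PowerSeries.coeff n (psComp g f)
      = ∑ k ∈ Finset.range (n + 1), PowerSeries.coeff k g * PowerSeries.coeff n (f ^ k) :=
  PowerSeries.coeff_mk _ _

lemma coeff_pow_eq_zero {f : PowerSeries K} (hf : PowerSeries.constantCoeff f = 0)
    {n k : ℕ} (h : n < k) : PowerSeries.coeff n (f ^ k) = 0 := by
  have hx : (PowerSeries.X : PowerSeries K) ^ k ∣ f ^ k :=
    pow_dvd_pow_of_dvd (PowerSeries.X_dvd_iff.mpr hf) k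
  exact (PowerSeries.X_pow_dvd_iff.mp hx) n h

lemma coeff_eq_of_sub_dvd {a b : PowerSeries K} {n : ℕ}
    (h : (PowerSeries.X : PowerSeries K) ^ (n + 1) ∣ a - b) :
    PowerSeries.coeff n a = PowerSeries.coeff n b := by
  have := (PowerSeries.X_pow_dvd_iff.mp h) n (Nat.lt_succ_self n)
  rw [map_sub, sub_eq_zero] at this
  exact this

lemma sub_dvd_of_coeff_eq {a b : PowerSeries K} {n : ℕ}
    (h : ∀ j < n, PowerSeries.coeff j a = PowerSeries.coeff j b) :
    (PowerSeries.X : PowerSeries K) ^ n ∣ a - b := by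
  refine PowerSeries.X_pow_dvd_iff.mpr fun m hm => ?_
  rw [map_sub, sub_eq_zero]
  exact h m hm

lemma coeff_psComp_ext {f : PowerSeries K} (hf : PowerSeries.constantCoeff f = 0)
    (g : PowerSeries K) {p n : ℕ} (hp : p ≤ n) :
    PowerSeries.coeff p (psComp g f)
      = ∑ i ∈ Finset.range (n + 1), PowerSeries.coeff i g * PowerSeries.coeff p (f ^ i) := by
  rw [coeff_psComp]
  refine Finset.sum_subset (Finset.range_subset_range.mpr (by omega)) fun i _ hi => ?_
  rw [coeff_pow_eq_zero hf (by simpa using hi), mul_zero]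

lemma sum_sq_eq (n : ℕ) (F : ℕ → ℕ → K) (hF : ∀ i j, n < i + j → F i j = 0) :
    ∑ k ∈ Finset.range (n + 1), ∑ p ∈ Finset.HasAntidiagonal.antidiagonal k, F p.1 p.2
      = ∑ i ∈ Finset.range (n + 1), ∑ j ∈ Finset.range (n + 1), F i j := by
  have hdisj : (↑(Finset.range (n + 1)) : Set ℕ).PairwiseDisjoint Finset.HasAntidiagonal.antidiagonal := by
    intro a _ b _ hab
    simp only [Finset.disjoint_left]
    intro p hpa hpb
    rw [Finset.HasAntidiagonal.mem_antidiagonal] at hpa hpb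
    exact hab (by omega)
  rw [← Finset.sum_biUnion hdisj, ← Finset.sum_product']
  refine Finset.sum_subset ?_ ?_
  · intro p hp
    rw [Finset.mem_biUnion] at hp
    obtain ⟨k, hk, hpk⟩ := hp
    rw [Finset.HasAntidiagonal.mem_antidiagonal] at hpk
    rw [Finset.mem_range] at hk
    simp only [Finset.mem_product, Finset.mem_range]
    omega
  · intro p _ hp
    rw [Finset.mem_biUnion] at hp
    by_cases h : p.1 + p.2 ≤ n
    · exact absurd ⟨p.1 + p.2, Finset.mem_range.mpr (by omega),
        Finset.HasAntidiagonal.mem_antidiagonal.mpr rfl⟩ hp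
    · exact hF p.1 p.2 (by omega)

lemma psComp_mul {f : PowerSeries K} (hf : PowerSeries.constantCoeff f = 0)
    (g h : PowerSeries K) :
    psComp (g * h) f = psComp g f * psComp h f := by
  ext n
  rw [coeff_psComp, PowerSeries.coeff_mul]
  calc
    ∑ k ∈ Finset.range (n + 1),
        PowerSeries.coeff k (g * h) * PowerSeries.coeff n (f ^ k)
      = ∑ k ∈ Finset.range (n + 1), ∑ p ∈ Finset.HasAntidiagonal.antidiagonal k,
          PowerSeries.coeff p.1 g * PowerSeries.coeff p.2 h
            * PowerSeries.coeff n (f ^ (p.1 + p.2)) := by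
        refine Finset.sum_congr rfl fun k _ => ?_
        rw [PowerSeries.coeff_mul, Finset.sum_mul]
        refine Finset.sum_congr rfl fun p hp => ?_
        rw [Finset.HasAntidiagonal.mem_antidiagonal.mp hp]
    _ = ∑ i ∈ Finset.range (n + 1), ∑ j ∈ Finset.range (n + 1),
          PowerSeries.coeff i g * PowerSeries.coeff j h
            * PowerSeries.coeff n (f ^ (i + j)) := by
        exact sum_sq_eq n
          (fun i j => PowerSeries.coeff i g * PowerSeries.coeff j h
            * PowerSeries.coeff n (f ^ (i + j)))
          (fun i j hij => by beta_reduce; rw [coeff_pow_eq_zero hf hij, mul_zero])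
    _ = ∑ i ∈ Finset.range (n + 1), ∑ j ∈ Finset.range (n + 1), ∑ p ∈ Finset.HasAntidiagonal.antidiagonal n,
          (PowerSeries.coeff i g * PowerSeries.coeff p.1 (f ^ i))
            * (PowerSeries.coeff j h * PowerSeries.coeff p.2 (f ^ j)) := by
        refine Finset.sum_congr rfl fun i _ => Finset.sum_congr rfl fun j _ => ?_
        rw [pow_add, PowerSeries.coeff_mul, Finset.mul_sum]
        refine Finset.sum_congr rfl fun p _ => ?_
        ring
    _ = ∑ p ∈ Finset.HasAntidiagonal.antidiagonal n, ∑ i ∈ Finset.range (n + 1), ∑ j ∈ Finset.range (n + 1),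
          (PowerSeries.coeff i g * PowerSeries.coeff p.1 (f ^ i))
            * (PowerSeries.coeff j h * PowerSeries.coeff p.2 (f ^ j)) := by
        rw [show (∑ i ∈ Finset.range (n + 1), ∑ j ∈ Finset.range (n + 1),
            ∑ p ∈ Finset.HasAntidiagonal.antidiagonal n,
            (PowerSeries.coeff i g * PowerSeries.coeff p.1 (f ^ i))
              * (PowerSeries.coeff j h * PowerSeries.coeff p.2 (f ^ j)))
          = ∑ i ∈ Finset.range (n + 1), ∑ p ∈ Finset.HasAntidiagonal.antidiagonal n,
            ∑ j ∈ Finset.range (n + 1),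
            (PowerSeries.coeff i g * PowerSeries.coeff p.1 (f ^ i))
              * (PowerSeries.coeff j h * PowerSeries.coeff p.2 (f ^ j))
          from Finset.sum_congr rfl fun i _ => Finset.sum_comm, Finset.sum_comm]
    _ = ∑ p ∈ Finset.HasAntidiagonal.antidiagonal n,
          PowerSeries.coeff p.1 (psComp g f) * PowerSeries.coeff p.2 (psComp h f) := by
        refine Finset.sum_congr rfl fun p hp => ?_
        have hpn := Finset.HasAntidiagonal.mem_antidiagonal.mp hp
        rw [coeff_psComp_ext hf g (show p.1 ≤ n by omega),
          coeff_psComp_ext hf h (show p.2 ≤ n by omega), Finset.sum_mul_sum]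

lemma psComp_one (f : PowerSeries K) : psComp 1 f = 1 := by
  ext n
  rw [coeff_psComp]
  rw [Finset.sum_eq_single 0]
  · simp
  · intro b _ hb
    rw [PowerSeries.coeff_one, if_neg hb, zero_mul]
  · intro h
    exact absurd (Finset.mem_range.mpr (Nat.succ_pos n)) h

lemma psComp_pow {f : PowerSeries K} (hf : PowerSeries.constantCoeff f = 0)
    (g : PowerSeries K) (m : ℕ) : psComp (g ^ m) f = psComp g f ^ m := by
  induction m with
  | zero => simpa using psComp_one f
  | succ m ih => rw [pow_succ, pow_succ, psComp_mul hf, ih]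

lemma psComp_X_left {f : PowerSeries K} (hf : PowerSeries.constantCoeff f = 0) :
    psComp PowerSeries.X f = f := by
  ext n
  rw [coeff_psComp, Finset.sum_eq_single 1]
  · rw [PowerSeries.coeff_X, if_pos rfl, pow_one, one_mul]
  · intro b _ hb
    rw [PowerSeries.coeff_X, if_neg hb, zero_mul]
  · intro h1
    have hn : n = 0 := by
      rcases Nat.eq_zero_or_pos n with h | h
      · exact h
      · exact absurd (Finset.mem_range.mpr (by omega)) h1
    subst hn
    rw [PowerSeries.coeff_X, if_pos rfl, pow_one, one_mul,
      PowerSeries.coeff_zero_eq_constantCoeff, hf]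

lemma psComp_X_right (g : PowerSeries K) : psComp g PowerSeries.X = g := by
  ext n
  rw [coeff_psComp, Finset.sum_eq_single n]
  · rw [PowerSeries.coeff_X_pow, if_pos rfl, mul_one]
  · intro b _ hb
    rw [PowerSeries.coeff_X_pow, if_neg (fun h => hb h.symm), mul_zero]
  · intro h
    exact absurd (Finset.mem_range.mpr (Nat.lt_succ_self n)) h

lemma constantCoeff_psComp (g f : PowerSeries K) :
    PowerSeries.constantCoeff (psComp g f) = PowerSeries.coeff 0 g := by
  rw [← PowerSeries.coeff_zero_eq_constantCoeff, coeff_psComp]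
  simp

lemma coeff_pow_congr {f g : PowerSeries K} (hf : PowerSeries.constantCoeff f = 0)
    (hg : PowerSeries.constantCoeff g = 0) {n k : ℕ} (hk : 2 ≤ k)
    (h : ∀ j < n, PowerSeries.coeff j f = PowerSeries.coeff j g) :
    PowerSeries.coeff n (f ^ k) = PowerSeries.coeff n (g ^ k) := by
  refine coeff_eq_of_sub_dvd ?_
  have hfact : f ^ k - g ^ k
      = (∑ i ∈ Finset.range k, f ^ i * g ^ (k - 1 - i)) * (f - g) := (geom_sum₂_mul f g k).symm
  rw [hfact, pow_succ']
  refine mul_dvd_mul ?_ (sub_dvd_of_coeff_eq h)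
  refine Finset.dvd_sum fun i hi => ?_
  rcases Nat.eq_zero_or_pos i with h0 | h0
  · subst h0
    refine Dvd.dvd.mul_left ?_ _
    exact dvd_pow (PowerSeries.X_dvd_iff.mpr hg) (by omega)
  · exact Dvd.dvd.mul_right (dvd_pow (PowerSeries.X_dvd_iff.mpr hf) (by omega)) _

lemma psComp_left_cancel {V P Q : PowerSeries K} (hV1 : PowerSeries.coeff 1 V ≠ 0)
    (hP : PowerSeries.constantCoeff P = 0) (hQ : PowerSeries.constantCoeff Q = 0)
    (h : psComp V P = psComp V Q) : P = Q := by
  ext n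
  induction n using Nat.strong_induction_on with
  | _ n ih =>
  rcases Nat.eq_zero_or_pos n with h0 | h0
  · subst h0
    rw [PowerSeries.coeff_zero_eq_constantCoeff, hP, hQ]
  · have hc := congrArg (PowerSeries.coeff n) h
    rw [coeff_psComp, coeff_psComp] at hc
    have h1 : (1 : ℕ) ∈ Finset.range (n + 1) := Finset.mem_range.mpr (by omega)
    rw [← Finset.add_sum_erase _ _ h1, ← Finset.add_sum_erase _ _ h1] at hc
    have heq : ∑ k ∈ (Finset.range (n + 1)).erase 1,
        PowerSeries.coeff k V * PowerSeries.coeff n (P ^ k)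
        = ∑ k ∈ (Finset.range (n + 1)).erase 1,
        PowerSeries.coeff k V * PowerSeries.coeff n (Q ^ k) := by
      refine Finset.sum_congr rfl fun k hk => ?_
      have hk1 : k ≠ 1 := (Finset.mem_erase.mp hk).1
      rcases Nat.eq_zero_or_pos k with hk0 | hk0
      · subst hk0; simp
      · rw [coeff_pow_congr hP hQ (by omega) ih]
    rw [heq] at hc
    have := add_right_cancel hc
    rw [pow_one, pow_one] at this
    exact mul_left_cancel₀ hV1 this

lemma psComp_assoc {f h : PowerSeries K} (hf : PowerSeries.constantCoeff f = 0)
    (hh : PowerSeries.constantCoeff h = 0) (g : PowerSeries K) :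
    psComp (psComp g f) h = psComp g (psComp f h) := by
  ext n
  rw [coeff_psComp, coeff_psComp]
  calc
    ∑ k ∈ Finset.range (n + 1),
        PowerSeries.coeff k (psComp g f) * PowerSeries.coeff n (h ^ k)
      = ∑ k ∈ Finset.range (n + 1), ∑ j ∈ Finset.range (n + 1),
          PowerSeries.coeff j g * PowerSeries.coeff k (f ^ j)
            * PowerSeries.coeff n (h ^ k) := by
        refine Finset.sum_congr rfl fun k hk => ?_
        rw [coeff_psComp_ext hf g (Nat.lt_succ_iff.mp (Finset.mem_range.mp hk)),
          Finset.sum_mul]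
    _ = ∑ j ∈ Finset.range (n + 1), ∑ k ∈ Finset.range (n + 1),
          PowerSeries.coeff j g
            * (PowerSeries.coeff k (f ^ j) * PowerSeries.coeff n (h ^ k)) := by
        rw [Finset.sum_comm]
        exact Finset.sum_congr rfl fun j _ => Finset.sum_congr rfl fun k _ => by ring
    _ = ∑ j ∈ Finset.range (n + 1),
          PowerSeries.coeff j g * PowerSeries.coeff n (psComp f h ^ j) := by
        refine Finset.sum_congr rfl fun j _ => ?_
        rw [← Finset.mul_sum, ← psComp_pow hh f j, coeff_psComp]

lemma coeff_truncsum {f : PowerSeries K} (hf : PowerSeries.constantCoeff f = 0)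
    (g : PowerSeries K) {p N : ℕ} (hp : p ≤ N) :
    PowerSeries.coeff p
        (∑ k ∈ Finset.range (N + 1), PowerSeries.C (PowerSeries.coeff k g) * f ^ k)
      = PowerSeries.coeff p (psComp g f) := by
  rw [map_sum, coeff_psComp_ext hf g hp]
  exact Finset.sum_congr rfl fun k _ => PowerSeries.coeff_C_mul _ _ _

lemma derivative_psComp {f : PowerSeries K} (hf : PowerSeries.constantCoeff f = 0)
    (g : PowerSeries K) :
    PowerSeries.derivative K (psComp g f)
      = psComp (PowerSeries.derivative K g) f * PowerSeries.derivative K f := by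
  ext n
  set S : PowerSeries K
    := ∑ k ∈ Finset.range (n + 2), PowerSeries.C (PowerSeries.coeff k g) * f ^ k with hS
  set T : PowerSeries K
    := ∑ i ∈ Finset.range (n + 1),
        PowerSeries.C (PowerSeries.coeff i (PowerSeries.derivative K g)) * f ^ i with hT
  have hST : PowerSeries.derivative K S = T * PowerSeries.derivative K f := by
    rw [hS, map_sum, hT, Finset.sum_mul]
    rw [Finset.sum_range_succ']
    have h0 : PowerSeries.derivative K
        (PowerSeries.C (PowerSeries.coeff 0 g) * f ^ 0) = 0 := by
      simp
    rw [h0, add_zero]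
    refine Finset.sum_congr rfl fun i _ => ?_
    rw [Derivation.leibniz, Derivation.leibniz_pow, PowerSeries.derivative_C, smul_zero,
      add_zero, PowerSeries.coeff_derivative, map_mul]
    simp only [Nat.add_sub_cancel, smul_eq_mul, nsmul_eq_mul]
    have hc : (PowerSeries.C) ((i : K) + 1) = ((i : PowerSeries K) + 1) := by
      rw [map_add, map_one, map_natCast]
    rw [hc]
    push_cast
    ring
  calc
    PowerSeries.coeff n (PowerSeries.derivative K (psComp g f))
      = PowerSeries.coeff (n + 1) (psComp g f) * (n + 1) := PowerSeries.coeff_derivative _ _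
    _ = PowerSeries.coeff (n + 1) S * (n + 1) := by
        rw [coeff_truncsum hf g (le_refl (n + 1))]
    _ = PowerSeries.coeff n (PowerSeries.derivative K S) :=
        (PowerSeries.coeff_derivative _ _).symm
    _ = PowerSeries.coeff n (T * PowerSeries.derivative K f) := by rw [hST]
    _ = PowerSeries.coeff n
          (psComp (PowerSeries.derivative K g) f * PowerSeries.derivative K f) := by
        rw [PowerSeries.coeff_mul, PowerSeries.coeff_mul]
        refine Finset.sum_congr rfl fun p hp => ?_
        have hpn := Finset.HasAntidiagonal.mem_antidiagonal.mp hp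
        rw [coeff_truncsum hf _ (show p.1 ≤ n by omega)]

lemma Ytilde_iterate {V W : PowerSeries K} (hV0 : PowerSeries.constantCoeff V = 0)
    (hW : W * PowerSeries.derivative K V = 1) (n : ℕ) (g : PowerSeries K) :
    (Ytilde W)^[n] (psComp g V)
      = psComp ((fun x => PowerSeries.derivative K x)^[n] g) V := by
  induction n generalizing g with
  | zero => rfl
  | succ n ih =>
    rw [Function.iterate_succ_apply', Function.iterate_succ_apply', ih, Ytilde,
      derivative_psComp hV0]
    calc
      W * (psComp (PowerSeries.derivative K ((fun x => PowerSeries.derivative K x)^[n] g)) V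
            * PowerSeries.derivative K V)
        = psComp (PowerSeries.derivative K ((fun x => PowerSeries.derivative K x)^[n] g)) V
            * (W * PowerSeries.derivative K V) := by ring
      _ = _ := by rw [hW, mul_one]

lemma coeff_zero_derivative_iterate (n : ℕ) (g : PowerSeries K) :
    PowerSeries.coeff 0 ((fun x => PowerSeries.derivative K x)^[n] g)
      = (n.factorial : K) * PowerSeries.coeff n g := by
  induction n generalizing g with
  | zero => simp
  | succ n ih =>
    rw [Function.iterate_succ_apply, ih, PowerSeries.coeff_derivative, Nat.factorial_succ]
    push_cast
    ring

end Aux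

theorem dual_vector_field_gives_inverse_powers {K : Type*} [Field K] [CharZero K]
    (V U W : PowerSeries K)
    (hV0 : PowerSeries.constantCoeff V = 0)
    (hV1 : PowerSeries.coeff 1 V = 1)
    (hU0 : PowerSeries.constantCoeff U = 0)
    (hUV : psComp V U = PowerSeries.X)
    (hW : W * PowerSeries.derivative K V = 1)
    (m n : ℕ) :
    PowerSeries.constantCoeff ((Ytilde W)^[n] (PowerSeries.X ^ m))
      = (n.factorial : K) * PowerSeries.coeff n (U ^ m) := by
  have hP0 : PowerSeries.constantCoeff (psComp U V) = 0 := by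
    rw [constantCoeff_psComp, PowerSeries.coeff_zero_eq_constantCoeff, hU0]
  have hkey : psComp V (psComp U V) = psComp V PowerSeries.X := by
    rw [← psComp_assoc hU0 hV0 V, hUV, psComp_X_left hV0, psComp_X_right]
  have hUVX : psComp U V = PowerSeries.X :=
    psComp_left_cancel (hV1 ▸ one_ne_zero) hP0 PowerSeries.constantCoeff_X hkey
  have hXm : PowerSeries.X ^ m = psComp (U ^ m) V := by
    rw [psComp_pow hV0, hUVX]
  rw [hXm, Ytilde_iterate hV0 hW, constantCoeff_psComp, coeff_zero_derivative_iterate]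
end
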